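/- For any commutative ring R and any R-linear map ḡ: Rʳ → Rˢ with r ≥ s, the Eagon–Northcott sequence EN(ḡ) is a complex: the composition of any two consecutive maps is zero, including the composition of the last differential (Sym₁Rˢ)^* ⊗ ⋀^{s+1}Rʳ → ⋀ˢRʳ with the map ⋀ˢḡ: ⋀ˢRʳ → R. -/

import Mathlib

/-!
STATEMENT 4: for any commutative ring `R` and any `R`-linear map `ḡ : Rʳ → Rˢ` with
`r ≥ s`, the Eagon–Northcott sequence
`EN(ḡ) : R ← ⋀ˢRʳ ← (Sym₁Rˢ)^* ⊗ ⋀^{s+1}Rʳ ← ⋯ ← (Sym_{r−s}Rˢ)^* ⊗ ⋀ʳRʳ ← 0`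
is a complex: the composite of any two consecutive maps is zero, including the composite
of the last differential `(Sym₁Rˢ)^* ⊗ ⋀^{s+1}Rʳ → ⋀ˢRʳ` with `⋀ˢḡ : ⋀ˢRʳ → R`.

Concrete realisation: `(Sym_k Rˢ)^* ⊗ ⋀^{s+k} Rʳ` is the free module on pairs `(μ, S)`
where `μ` is an exponent vector on `Fin s` of total size `k` (indexing the dual basis of
the monomial basis of `Sym_k Rˢ`) and `S ⊆ Fin r` has `s + k` elements (indexing
`e_{i₁} ∧ ⋯ ∧ e_{i_{s+k}}`, `i₁ < ⋯ < i_{s+k}`).  The differential sends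
`φ ⊗ e_{i₁} ∧ ⋯ ∧ e_{i_{s+k}}` to `∑_j (−1)^{j+1} φ(ḡ(e_{i_j})·−) ⊗ e_{i₁} ∧ ⋯ ∧
ê_{i_j} ∧ ⋯ ∧ e_{i_{s+k}}`, i.e. in dual-basis coordinates
`(d x)(μ, T) = ∑_{i ∉ T} (−1)^{|{j ∈ T : j < i}|} ∑_l g_{l i} · x (μ + εₗ, T ∪ {i})`,
and the augmentation `⋀ˢ ḡ` sends `e_S` to the `s × s` minor of `ḡ` with columns `S`.
-/

noncomputable section

/-- total size of an exponent vector (the degree of the corresponding monomial) -/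
def expSize {s : ℕ} (d : Fin s →₀ ℕ) : ℕ := d.sum fun _ n => n

/-- The term `(Sym_k Rˢ)^* ⊗ ⋀^{s+k} Rʳ` of the Eagon–Northcott sequence, realised as
the free module on (monomial of degree `k` in `s` variables) × (subset of `Fin r` of
cardinality `s + k`). -/
abbrev ENTerm (A : Type) [CommRing A] (r s k : ℕ) : Type :=
  ({d : Fin s →₀ ℕ // expSize d = k} × {S : Finset (Fin r) // S.card = s + k}) → A

/-- The Eagon–Northcott differential
`(Sym_{k+1} Rˢ)^* ⊗ ⋀^{s+k+1} Rʳ → (Sym_k Rˢ)^* ⊗ ⋀^{s+k} Rʳ`,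
`φ ⊗ e_{i₁} ∧ ⋯ ↦ ∑_j (−1)^{j+1} φ(ḡ(e_{i_j})·−) ⊗ e_{i₁} ∧ ⋯ ∧ ê_{i_j} ∧ ⋯`,
where `g` is the matrix of `ḡ`. -/
noncomputable def ENd {A : Type} [CommRing A] {r s : ℕ}
    (g : Matrix (Fin s) (Fin r) A) (k : ℕ) :
    ENTerm A r s (k + 1) →ₗ[A] ENTerm A r s k :=
  LinearMap.pi fun P => ∑ i : Fin r,
    if h : i ∈ P.2.1 then 0
    else ∑ l : Fin s,
      ((-1 : A) ^ ((P.2.1.filter (· < i)).card) * g l i) •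
        LinearMap.proj (R := A)
          ((⟨⟨P.1.1 + Finsupp.single l 1, by
              simpa [expSize, Finsupp.sum_add_index'] using P.1.2⟩,
            ⟨insert i P.2.1, by rw [Finset.card_insert_of_notMem h, P.2.2]; omega⟩⟩ :
            {d : Fin s →₀ ℕ // expSize d = k + 1} ×
              {S : Finset (Fin r) // S.card = s + (k + 1)}))

/-- The augmentation `⋀ˢ ḡ : ⋀ˢ Rʳ → ⋀ˢ Rˢ ≅ R` of the Eagon–Northcott sequence,
sending `e_{i₁} ∧ ⋯ ∧ e_{i_s}` to the corresponding maximal minor of `g`. -/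
noncomputable def ENaug {A : Type} [CommRing A] {r s : ℕ}
    (g : Matrix (Fin s) (Fin r) A) :
    ENTerm A r s 0 →ₗ[A] A :=
  ∑ S : {S : Finset (Fin r) // S.card = s + 0},
    (Matrix.det (Matrix.of fun a b : Fin s => g a ((S.1.orderIsoOfFin (by omega) b : Fin r)))) •
      (LinearMap.proj (R := A)
        ((⟨0, by simp [expSize]⟩, S) :
          {d : Fin s →₀ ℕ // expSize d = 0} × {S : Finset (Fin r) // S.card = s + 0}))

theorem ENd_apply {A : Type} [CommRing A] {r s : ℕ} (g : Matrix (Fin s) (Fin r) A) (k : ℕ)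
    (x : ENTerm A r s (k+1)) (P) :
    ENd g k x P = ∑ i : Fin r,
      if h : i ∈ P.2.1 then 0
      else ∑ l : Fin s,
        ((-1 : A) ^ ((P.2.1.filter (· < i)).card) * g l i) *
          x ⟨⟨P.1.1 + Finsupp.single l 1, by
              simpa [expSize, Finsupp.sum_add_index'] using P.1.2⟩,
            ⟨insert i P.2.1, by rw [Finset.card_insert_of_notMem h, P.2.2]; omega⟩⟩ := by
  simp [ENd, LinearMap.pi_apply, LinearMap.sum_apply,
    apply_dite (fun (φ : ENTerm A r s (k+1) →ₗ[A] A) => φ x)]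

theorem card_filter_insert {r : ℕ} (T : Finset (Fin r)) (i j : Fin r) (hi : i ∉ T) :
    ((insert i T).filter (· < j)).card = (T.filter (· < j)).card + if i < j then 1 else 0 := by
  rw [Finset.filter_insert]
  split
  · rw [Finset.card_insert_of_notMem (by simp [hi])]
  · omega

theorem sign_swap {A : Type} [CommRing A] {r : ℕ} (T : Finset (Fin r)) (i j : Fin r)
    (hi : i ∉ T) (hj : j ∉ T) (hij : i ≠ j) :
    (-1 : A) ^ ((T.filter (· < i)).card) * (-1) ^ (((insert i T).filter (· < j)).card)
      = -((-1 : A) ^ ((T.filter (· < j)).card) * (-1) ^ (((insert j T).filter (· < i)).card)) := by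
  rw [card_filter_insert T i j hi, card_filter_insert T j i hj]
  rcases lt_or_gt_of_ne hij with h | h
  · rw [if_pos h, if_neg (asymm h)]
    simp [pow_succ]; ring
  · rw [if_neg (asymm h), if_pos h]
    simp [pow_succ]; ring

def ddF {A : Type} [CommRing A] {r s : ℕ} (g : Matrix (Fin s) (Fin r) A) {k : ℕ}
    (x : ENTerm A r s (k + 1 + 1)) (μ : Fin s →₀ ℕ) (hμ : expSize μ = k) (T : Finset (Fin r))
    (hT : T.card = s + k) (p : (Fin r × Fin s) × (Fin r × Fin s)) : A :=
  if h : p.1.1 ∈ T ∨ p.2.1 ∈ insert p.1.1 T then 0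
  else ((-1 : A) ^ ((T.filter (· < p.1.1)).card) * g p.1.2 p.1.1) *
    (((-1 : A) ^ (((insert p.1.1 T).filter (· < p.2.1)).card) * g p.2.2 p.2.1) *
      x ⟨⟨μ + Finsupp.single p.1.2 1 + Finsupp.single p.2.2 1, by
            simp [expSize, Finsupp.sum_add_index'] at *; omega⟩,
        ⟨insert p.2.1 (insert p.1.1 T), by
            push_neg at h
            rw [Finset.card_insert_of_notMem h.2, Finset.card_insert_of_notMem h.1, hT]; omega⟩⟩)

theorem ddF_skew {A : Type} [CommRing A] {r s : ℕ} (g : Matrix (Fin s) (Fin r) A) {k : ℕ}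
    (x : ENTerm A r s (k + 1 + 1)) (μ : Fin s →₀ ℕ) (hμ : expSize μ = k) (T : Finset (Fin r))
    (hT : T.card = s + k) (p : (Fin r × Fin s) × (Fin r × Fin s)) :
    ddF g x μ hμ T hT p + ddF g x μ hμ T hT (p.2, p.1) = 0 := by
  obtain ⟨⟨i, l⟩, ⟨j, m⟩⟩ := p
  by_cases h : i ∈ T ∨ j ∈ insert i T
  · have h' : j ∈ T ∨ i ∈ insert j T := by
      rcases h with h | h
      · exact Or.inr (Finset.mem_insert_of_mem h)
      · rcases Finset.mem_insert.1 h with rfl | h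
        · exact Or.inr (Finset.mem_insert_self _ _)
        · exact Or.inl h
    rw [ddF, ddF, dif_pos h, dif_pos h', add_zero]
  · push_neg at h
    obtain ⟨hi, hj⟩ := h
    rw [Finset.mem_insert, not_or] at hj
    obtain ⟨hji, hjT⟩ := hj
    have h' : ¬(j ∈ T ∨ i ∈ insert j T) := by
      rw [Finset.mem_insert]
      push_neg
      exact ⟨hjT, fun e => hji e.symm, hi⟩
    rw [ddF, ddF, dif_neg (by push_neg; exact ⟨hi, by rw [Finset.mem_insert]; push_neg; exact ⟨hji, hjT⟩⟩), dif_neg h']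
    have hxeq : x ⟨⟨μ + Finsupp.single l 1 + Finsupp.single m 1, by
            simp [expSize, Finsupp.sum_add_index'] at *; omega⟩,
        ⟨insert j (insert i T), by
            rw [Finset.card_insert_of_notMem (by rw [Finset.mem_insert]; push_neg; exact ⟨hji, hjT⟩),
              Finset.card_insert_of_notMem hi, hT]; omega⟩⟩
        = x ⟨⟨μ + Finsupp.single m 1 + Finsupp.single l 1, by
            simp [expSize, Finsupp.sum_add_index'] at *; omega⟩,
        ⟨insert i (insert j T), by
            rw [Finset.card_insert_of_notMem (by rw [Finset.mem_insert]; push_neg; exact ⟨fun e => hji e.symm, hi⟩),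
              Finset.card_insert_of_notMem hjT, hT]; omega⟩⟩ := by
      congr 1
      refine Prod.ext (Subtype.ext ?_) (Subtype.ext ?_)
      · exact add_right_comm _ _ _
      · exact Finset.insert_comm _ _ _
    have hs := sign_swap (A := A) T i j hi hjT (fun e => hji e.symm)
    simp only [hxeq]
    set y := x _
    linear_combination (g l i * g m j * y) * hs

theorem ENd_comp_ENd {A : Type} [CommRing A] {r s : ℕ} (g : Matrix (Fin s) (Fin r) A) (k : ℕ) :
    (ENd g k).comp (ENd g (k + 1)) = 0 := by
  apply LinearMap.ext; intro x; funext P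
  obtain ⟨⟨μ, hμ⟩, ⟨T, hT⟩⟩ := P
  have h0 : ∑ p : (Fin r × Fin s) × (Fin r × Fin s), ddF g x μ hμ T hT p = 0 := by
    refine Finset.sum_ninvolution (fun p => (p.2, p.1))
      (fun p => ddF_skew g x μ hμ T hT p) (fun p hp => ?_) (fun _ => Finset.mem_univ _)
      (fun p => rfl)
    intro hsw
    apply hp
    have h1 : p.1 = p.2 := congrArg Prod.snd hsw
    rw [ddF, dif_pos (Or.inr (by rw [← h1]; exact Finset.mem_insert_self _ _))]
  simp only [LinearMap.comp_apply, LinearMap.zero_apply, Pi.zero_apply]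
  rw [ENd_apply]
  refine Eq.trans ?_ h0
  simp only [Fintype.sum_prod_type]
  refine Finset.sum_congr rfl fun i _ => ?_
  by_cases hi : i ∈ T
  · rw [dif_pos hi]
    refine Eq.symm (Finset.sum_eq_zero fun l _ => Finset.sum_eq_zero fun j _ =>
      Finset.sum_eq_zero fun m _ => ?_)
    rw [ddF, dif_pos (Or.inl hi)]
  · rw [dif_neg hi]
    refine Finset.sum_congr rfl fun l _ => ?_
    rw [ENd_apply, Finset.mul_sum]
    refine Finset.sum_congr rfl fun j _ => ?_
    by_cases hj : j ∈ insert i T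
    · rw [dif_pos hj, mul_zero]
      refine (Finset.sum_eq_zero fun m _ => ?_).symm
      rw [ddF, dif_pos (Or.inr hj)]
    · rw [dif_neg hj, Finset.mul_sum]
      refine Finset.sum_congr rfl fun m _ => ?_
      rw [ddF, dif_neg (by push_neg; exact ⟨hi, hj⟩)]

theorem card_filter_lt_orderEmb {α : Type*} [LinearOrder α] (T : Finset α) {n : ℕ}
    (h : T.card = n) (j : Fin n) :
    (T.filter (· < T.orderEmbOfFin h j)).card = j := by
  have himg : T.filter (· < T.orderEmbOfFin h j) = (Finset.Iio j).image (T.orderEmbOfFin h) := by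
    ext t
    simp only [Finset.mem_filter, Finset.mem_image, Finset.mem_Iio]
    constructor
    · rintro ⟨ht, hlt⟩
      have hemb : T.orderEmbOfFin h ((T.orderIsoOfFin h).symm ⟨t, ht⟩) = t := by
        rw [← Finset.coe_orderIsoOfFin_apply, OrderIso.apply_symm_apply]
      refine ⟨(T.orderIsoOfFin h).symm ⟨t, ht⟩, ?_, hemb⟩
      rw [← hemb] at hlt
      exact (T.orderEmbOfFin h).strictMono.lt_iff_lt.mp hlt
    · rintro ⟨b, hbj, rfl⟩
      exact ⟨Finset.orderEmbOfFin_mem _ _ _, (T.orderEmbOfFin h).strictMono hbj⟩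
  rw [himg, Finset.card_image_of_injective _ (T.orderEmbOfFin h).injective, Fin.card_Iio]

theorem erase_orderEmbOfFin {α : Type*} [LinearOrder α] [DecidableEq α] (T : Finset α) {n : ℕ}
    (h : T.card = n + 1) (j : Fin (n + 1)) (h' : (T.erase (T.orderEmbOfFin h j)).card = n)
    (b : Fin n) :
    (T.erase (T.orderEmbOfFin h j)).orderEmbOfFin h' b = T.orderEmbOfFin h (j.succAbove b) := by
  have key := Finset.orderEmbOfFin_unique h'
    (f := fun b => T.orderEmbOfFin h (j.succAbove b))
    (fun b' => Finset.mem_erase.mpr ⟨(T.orderEmbOfFin h).injective.ne (Fin.succAbove_ne j b'),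
      Finset.orderEmbOfFin_mem _ _ _⟩)
    ((T.orderEmbOfFin h).strictMono.comp (Fin.strictMono_succAbove j))
  exact (congrFun key b).symm

theorem laplace_zero {A : Type} [CommRing A] {r s : ℕ} (g : Matrix (Fin s) (Fin r) A)
    (T : Finset (Fin r)) (hT : T.card = s + 1)
    (pf : ∀ j : Fin (s + 1), (T.erase (T.orderEmbOfFin hT j)).card = s) (l : Fin s) :
    ∑ j : Fin (s + 1), ((-1 : A) ^ (j : ℕ) * g l (T.orderEmbOfFin hT j)) *
      Matrix.det (Matrix.of fun a b : Fin s =>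
        g a ((T.erase (T.orderEmbOfFin hT j)).orderEmbOfFin (pf j) b)) = 0 := by
  set M : Matrix (Fin (s + 1)) (Fin (s + 1)) A :=
    Matrix.of fun p b => Fin.cases (g l (T.orderEmbOfFin hT b))
      (fun a => g a (T.orderEmbOfFin hT b)) p with hM
  have hdet : M.det = 0 := by
    refine Matrix.det_zero_of_row_eq (i := 0) (j := Fin.succ l) (Fin.succ_ne_zero l).symm ?_
    funext b
    simp [hM]
  rw [Matrix.det_succ_row_zero] at hdet
  refine Eq.trans ?_ hdet
  refine Finset.sum_congr rfl fun j _ => ?_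
  have h1 : M 0 j = g l (T.orderEmbOfFin hT j) := by simp [hM]
  have h2 : (M.submatrix Fin.succ j.succAbove) = Matrix.of fun a b : Fin s =>
      g a ((T.erase (T.orderEmbOfFin hT j)).orderEmbOfFin (pf j) b) := by
    ext a b
    simp only [hM, Matrix.submatrix_apply, Matrix.of_apply, Fin.cases_succ]
    rw [erase_orderEmbOfFin T hT j (pf j) b]
  rw [h1, h2, mul_assoc]

def aG {A : Type} [CommRing A] {r s : ℕ} (g : Matrix (Fin s) (Fin r) A)
    (x : ENTerm A r s (0 + 1))
    (q : {S : Finset (Fin r) // S.card = s + 0} × Fin r × Fin s) : A :=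
  if h : q.2.1 ∈ q.1.1 then 0
  else
    Matrix.det (Matrix.of fun a b : Fin s => g a ((q.1.1.orderIsoOfFin q.1.2 b : Fin r))) *
      (((-1 : A) ^ ((q.1.1.filter (· < q.2.1)).card) * g q.2.2 q.2.1) *
        x ⟨⟨(0 : Fin s →₀ ℕ) + Finsupp.single q.2.2 1, by
              simp [expSize, Finsupp.sum_add_index']⟩,
          ⟨insert q.2.1 q.1.1, by rw [Finset.card_insert_of_notMem h, q.1.2]⟩⟩)

def aH {A : Type} [CommRing A] {r s : ℕ} (g : Matrix (Fin s) (Fin r) A)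
    (x : ENTerm A r s (0 + 1))
    (w : {T : Finset (Fin r) // T.card = s + 1} × Fin (s + 1) × Fin s) : A :=
  (((-1 : A) ^ ((w.2.1 : ℕ)) * g w.2.2 (w.1.1.orderEmbOfFin w.1.2 w.2.1)) *
      Matrix.det (Matrix.of fun a b : Fin s =>
        g a ((w.1.1.erase (w.1.1.orderEmbOfFin w.1.2 w.2.1)).orderEmbOfFin
          (by rw [Finset.card_erase_of_mem (Finset.orderEmbOfFin_mem _ _ _), w.1.2]; omega) b))) *
    x ⟨⟨(0 : Fin s →₀ ℕ) + Finsupp.single w.2.2 1, by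
          simp [expSize, Finsupp.sum_add_index']⟩,
      ⟨w.1.1, w.1.2⟩⟩

theorem symm_congr {α : Type*} [LinearOrder α] {n : ℕ} (U V : Finset α) (hUV : U = V)
    (hU : U.card = n) (hV : V.card = n) (a : α) (ha : a ∈ U) (ha' : a ∈ V) :
    (U.orderIsoOfFin hU).symm ⟨a, ha⟩ = (V.orderIsoOfFin hV).symm ⟨a, ha'⟩ := by
  subst hUV; rfl

theorem det_set_congr {A : Type} [CommRing A] {r s : ℕ} (g : Matrix (Fin s) (Fin r) A)
    (U V : Finset (Fin r)) (hUV : U = V) (hU : U.card = s) (hV : V.card = s) :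
    Matrix.det (Matrix.of fun a b : Fin s => g a (U.orderEmbOfFin hU b)) =
      Matrix.det (Matrix.of fun a b : Fin s => g a ((V.orderIsoOfFin hV b : Fin r))) := by
  subst hUV; rfl

theorem ENaug_comp_ENd {A : Type} [CommRing A] {r s : ℕ} (g : Matrix (Fin s) (Fin r) A) :
    (ENaug g).comp (ENd g 0) = 0 := by
  apply LinearMap.ext; intro x
  simp only [LinearMap.comp_apply, LinearMap.zero_apply]
  simp only [ENaug, LinearMap.sum_apply, LinearMap.smul_apply, LinearMap.proj_apply,
    smul_eq_mul]
  have h2 : ∑ q : {S : Finset (Fin r) // S.card = s + 0} × Fin r × Fin s, aG g x q = 0 := by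
    rw [← Finset.sum_filter_of_ne (p := fun q : {S : Finset (Fin r) // S.card = s + 0} × Fin r × Fin s => q.2.1 ∉ q.1.1)
      (fun q _ hq => by
        intro hmem
        exact hq (by rw [aG, dif_pos hmem]))]
    have hbij : ∑ q ∈ Finset.univ.filter
        (fun q : {S : Finset (Fin r) // S.card = s + 0} × Fin r × Fin s => q.2.1 ∉ q.1.1),
        aG g x q =
        ∑ w : {T : Finset (Fin r) // T.card = s + 1} × Fin (s + 1) × Fin s, aH g x w := by
      refine Finset.sum_bij'
        (fun q hq =>
          (⟨insert q.2.1 q.1.1, by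
              rw [Finset.card_insert_of_notMem (Finset.mem_filter.mp hq).2, q.1.2]⟩,
            ((insert q.2.1 q.1.1).orderIsoOfFin (by
              rw [Finset.card_insert_of_notMem (Finset.mem_filter.mp hq).2, q.1.2])).symm
              ⟨q.2.1, Finset.mem_insert_self _ _⟩, q.2.2))
        (fun w _ =>
          (⟨w.1.1.erase (w.1.1.orderEmbOfFin w.1.2 w.2.1), by
              rw [Finset.card_erase_of_mem (Finset.orderEmbOfFin_mem _ _ _), w.1.2]; omega⟩,
            w.1.1.orderEmbOfFin w.1.2 w.2.1, w.2.2))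
        (fun _ _ => Finset.mem_univ _)
        (fun w _ => Finset.mem_filter.mpr ⟨Finset.mem_univ _, Finset.notMem_erase _ _⟩)
        ?_ ?_ ?_
      · -- left_inv
        intro q hq
        obtain ⟨S, i, l⟩ := q
        have hi : i ∉ S.1 := (Finset.mem_filter.mp hq).2
        have hcard : (insert i S.1).card = s + 1 := by
          rw [Finset.card_insert_of_notMem hi, S.2]
        have hemb : (insert i S.1).orderEmbOfFin hcard
            (((insert i S.1).orderIsoOfFin hcard).symm ⟨i, Finset.mem_insert_self _ _⟩) = i := by
          rw [← Finset.coe_orderIsoOfFin_apply, OrderIso.apply_symm_apply]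
        refine Prod.ext (Subtype.ext ?_) (Prod.ext ?_ rfl)
        · show (insert i S.1).erase _ = S.1
          rw [hemb]
          exact Finset.erase_insert hi
        · exact hemb
      · -- right_inv
        intro w _
        obtain ⟨T, j, l⟩ := w
        have hmem : T.1.orderEmbOfFin T.2 j ∈ T.1 := Finset.orderEmbOfFin_mem _ _ _
        have hins : insert (T.1.orderEmbOfFin T.2 j) (T.1.erase (T.1.orderEmbOfFin T.2 j))
            = T.1 := Finset.insert_erase hmem
        refine Prod.ext (Subtype.ext hins) (Prod.ext ?_ rfl)
        dsimp only
        rw [symm_congr _ T.1 hins _ T.2 _ (Finset.mem_insert_self _ _) hmem]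
        have : (⟨T.1.orderEmbOfFin T.2 j, hmem⟩ : {y // y ∈ T.1}) = T.1.orderIsoOfFin T.2 j :=
          Subtype.ext (Finset.coe_orderIsoOfFin_apply _ _ _).symm
        rw [this, OrderIso.symm_apply_apply]
      · -- values
        intro q hq
        obtain ⟨S, i, l⟩ := q
        have hi : i ∉ S.1 := (Finset.mem_filter.mp hq).2
        have hcard : (insert i S.1).card = s + 1 := by
          rw [Finset.card_insert_of_notMem hi, S.2]
        have hemb : ∀ (hc : (insert i S.1).card = s + 1) (hm : i ∈ insert i S.1),
            (insert i S.1).orderEmbOfFin hc (((insert i S.1).orderIsoOfFin hc).symm ⟨i, hm⟩)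
              = i := by
          intro hc hm
          rw [← Finset.coe_orderIsoOfFin_apply, OrderIso.apply_symm_apply]
        have hj₀ : ∀ (hc : (insert i S.1).card = s + 1) (hm : i ∈ insert i S.1),
            ((((insert i S.1).orderIsoOfFin hc).symm ⟨i, hm⟩ : Fin (s + 1)) : ℕ)
              = ((S.1.filter (· < i)).card) := by
          intro hc hm
          have h1 := card_filter_lt_orderEmb (insert i S.1) hc
            (((insert i S.1).orderIsoOfFin hc).symm ⟨i, hm⟩)
          rw [hemb hc hm] at h1
          rw [← h1, Finset.filter_insert, if_neg (lt_irrefl i)]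
        rw [aG, aH, dif_neg hi]
        simp only [hemb, hj₀]
        rw [det_set_congr g _ S.1 (Finset.erase_insert hi) _ S.2]
        rw [mul_left_comm, ← mul_assoc]
    rw [hbij]
    simp only [Fintype.sum_prod_type]
    refine Finset.sum_eq_zero fun T _ => ?_
    rw [Finset.sum_comm]
    refine Finset.sum_eq_zero fun l _ => ?_
    have pf : ∀ j : Fin (s + 1), ((T.1.erase (T.1.orderEmbOfFin T.2 j)).card = s) := fun j => by
      rw [Finset.card_erase_of_mem (Finset.orderEmbOfFin_mem _ _ _), T.2]; omega
    have pfx : expSize ((0 : Fin s →₀ ℕ) + Finsupp.single l 1) = 0 + 1 := by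
      simp [expSize, Finsupp.sum_add_index']
    have hterm : ∀ j : Fin (s + 1), aH g x (T, j, l) =
        (((-1 : A) ^ (j : ℕ) * g l (T.1.orderEmbOfFin T.2 j)) *
          Matrix.det (Matrix.of fun a b : Fin s =>
            g a ((T.1.erase (T.1.orderEmbOfFin T.2 j)).orderEmbOfFin (pf j) b))) *
          x ⟨⟨(0 : Fin s →₀ ℕ) + Finsupp.single l 1, pfx⟩, ⟨T.1, T.2⟩⟩ := fun j => rfl
    rw [Finset.sum_congr rfl fun j _ => hterm j, ← Finset.sum_mul,
      laplace_zero g T.1 T.2 pf l, zero_mul]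
  refine Eq.trans ?_ h2
  simp only [Fintype.sum_prod_type]
  refine Finset.sum_congr rfl fun S _ => ?_
  rw [ENd_apply, Finset.mul_sum]
  refine Finset.sum_congr rfl fun i _ => ?_
  by_cases hi : i ∈ S.1
  · rw [dif_pos hi, mul_zero]
    exact (Finset.sum_eq_zero fun l _ => by rw [aG, dif_pos hi]).symm
  · rw [dif_neg hi, Finset.mul_sum]
    refine Finset.sum_congr rfl fun l _ => ?_
    rw [aG, dif_neg hi]

/-- **The Eagon–Northcott sequence is a complex.**  For any commutative ring `R` and any
`R`-linear map `ḡ : Rʳ → Rˢ` with `r ≥ s`, the composite of any two consecutive maps of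
`EN(ḡ)` is zero, including the composite of the last differential with `⋀ˢ ḡ : ⋀ˢRʳ → R`. -/
theorem eagonNorthcott_isComplex {A : Type} [CommRing A] {r s : ℕ} (hrs : s ≤ r)
    (gbar : (Fin r → A) →ₗ[A] (Fin s → A)) :
    (∀ k : ℕ, (ENd (LinearMap.toMatrix' gbar) k).comp
        (ENd (LinearMap.toMatrix' gbar) (k + 1)) = 0) ∧
    (ENaug (LinearMap.toMatrix' gbar)).comp (ENd (LinearMap.toMatrix' gbar) 0) = 0 :=
  ⟨fun k => ENd_comp_ENd (LinearMap.toMatrix' gbar) k,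
    ENaug_comp_ENd (LinearMap.toMatrix' gbar)⟩

end
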